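/- Let f = (f_n)_{n=0}^M be a sequence in X with f_0 + f_1 + ⋯ + f_M = 0, and let k be an integer with 1 ≤ k ≤ M−1. Then for every k ≤ n ≤ M, ‖D^k f_n‖ ≤ c_{A,1} · ‖D^k f‖_0^{1/2} · ‖D^k f‖_1^{1/2}, where c_{A,1} = (1 + (√2 c_A)^{4/3})^{3/4} and c_A = √(2 + √2/2). -/

import Mathlib

noncomputable def cA : ℝ := Real.sqrt (2 + Real.sqrt 2 / 2)
noncomputable def cA1 : ℝ := (1 + (Real.sqrt 2 * cA) ^ ((4:ℝ)/3)) ^ ((3:ℝ)/4)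
noncomputable def cB1 : ℝ := 2 * Real.sqrt (1 + 2 * (cA * cA1)^2)

/-- `dAux j = (d̂_j, ∏_{i≤j} d̂_i^{1/(i+1)})`, realizing the recursion (4.20). -/
noncomputable def dAux : ℕ → ℝ × ℝ
  | 0 => (cB1, cB1)
  | (j+1) =>
      let d : ℝ := (1 + (dAux j).1 ^ (2*((j:ℝ)+2))) ^ (((j:ℝ)+2) / (2*((j:ℝ)+1)*((j:ℝ)+3))) *
                   ((dAux j).2) ^ (((j:ℝ)+2) / (((j:ℝ)+1)*((j:ℝ)+3)))
      (d, (dAux j).2 * d ^ (1/((j:ℝ)+2)))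

noncomputable def dHat (j : ℕ) : ℝ := (dAux j).1

/-- `cAux j = (ĉ_j, ∏_{i≤j} ĉ_i^{1/(i+1)})`, realizing the recursion (4.19). -/
noncomputable def cAux : ℕ → ℝ × ℝ
  | 0 => (cB1 / Real.sqrt 2, cB1 / Real.sqrt 2)
  | (j+1) =>
      let c : ℝ := (1 + dHat j ^ (2*((j:ℝ)+2))) ^ (((j:ℝ)+2) / (2*((j:ℝ)+1)*((j:ℝ)+3))) *
                   ((cAux j).2) ^ (((j:ℝ)+2) / (((j:ℝ)+1)*((j:ℝ)+3)))
      (c, (cAux j).2 * c ^ (1/((j:ℝ)+2)))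

noncomputable def cHat (j : ℕ) : ℝ := (cAux j).1

/-- the constant `c_m = ∏_{j=0}^{m-2} ĉ_j^{1/(j+1)}` (equal to `1` for `m = 1`). -/
noncomputable def cConst (m : ℕ) : ℝ := ∏ j ∈ Finset.range (m-1), cHat j ^ (1/((j:ℝ)+1))

/-- backward difference quotient of a sequence. -/
noncomputable def Dq {X : Type*} [NormedAddCommGroup X] [NormedSpace ℝ X] (τ : ℝ) (f : ℕ → X) : ℕ → X :=
  fun n => τ⁻¹ • (f n - f (n - 1))

/-- discrete `L²` norm `(τ Σ_{n=a}^{b} ‖f n‖²)^{1/2}`. -/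
noncomputable def seqNorm0 {X : Type*} [NormedAddCommGroup X]
    (τ : ℝ) (a b : ℕ) (f : ℕ → X) : ℝ :=
  Real.sqrt (τ * ∑ n ∈ Finset.Icc a b, ‖f n‖^2)

/-- `T_0 = T` and `T_j = (M+1−j)τ` for `j ≥ 1`. -/
noncomputable def Tk (τ T : ℝ) (M j : ℕ) : ℝ := if j = 0 then T else ((M:ℝ) + 1 - (j:ℝ)) * τ

/-- the scale-invariant norm `‖Dᵏf‖_m = (Σ_{j=k}^{k+m} T_j^{−2(m+k−j)} ‖Dʲf‖₀²)^{1/2}`. -/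
noncomputable def normm {X : Type*} [NormedAddCommGroup X] [NormedSpace ℝ X]
    (τ T : ℝ) (M k m : ℕ) (f : ℕ → X) : ℝ :=
  Real.sqrt (∑ j ∈ Finset.Icc k (k+m),
    (seqNorm0 τ j M ((Dq τ)^[j] f))^2 / (Tk τ T M j)^(2*(m+k-j)))


private lemma telescope_abs (F : ℕ → ℝ) (a : ℕ) :
    ∀ n, a ≤ n → |F n - F a| ≤ ∑ i ∈ Finset.Icc (a+1) n, |F i - F (i-1)| := by
  intro n
  induction n with
  | zero =>
    intro h
    have : a = 0 := by omega
    subst this; simp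
  | succ n ih =>
    intro h
    rcases Nat.lt_or_ge a (n+1) with h' | h'
    · have ha : a ≤ n := by omega
      rw [Finset.sum_Icc_succ_top (by omega)]
      have htri : |F (n+1) - F a| ≤ |F (n+1) - F n| + |F n - F a| := abs_sub_le _ _ _
      have : F (n+1-1) = F n := by norm_num
      rw [this]
      have := ih ha
      linarith
    · have : a = n+1 := by omega
      subst this; simp

private lemma two_point (F : ℕ → ℝ) {a b m n : ℕ} (ham : a ≤ m) (hmb : m ≤ b)
    (han : a ≤ n) (hnb : n ≤ b) :
    F n ≤ F m + ∑ i ∈ Finset.Icc (a+1) b, |F i - F (i-1)| := by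
  have key : ∀ p q : ℕ, a ≤ p → p ≤ q → q ≤ b →
      |F q - F p| ≤ ∑ i ∈ Finset.Icc (a+1) b, |F i - F (i-1)| := by
    intro p q hap hpq hqb
    calc |F q - F p| ≤ ∑ i ∈ Finset.Icc (p+1) q, |F i - F (i-1)| := telescope_abs F p q hpq
      _ ≤ _ := Finset.sum_le_sum_of_subset_of_nonneg
          (Finset.Icc_subset_Icc (by omega) hqb) (fun i _ _ => abs_nonneg _)
  rcases le_total m n with h | h
  · have h1 := key m n ham h hnb
    have h2 := le_abs_self (F n - F m)
    linarith
  · have h1 := key n m han h hmb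
    have h2 := neg_abs_le (F m - F n)
    linarith

private lemma le_of_sq_le_sq' {x y : ℝ} (hx : 0 ≤ x) (hy : 0 ≤ y) (h : x^2 ≤ y^2) : x ≤ y := by
  nlinarith

private lemma cA1_nonneg : 0 ≤ cA1 := by
  unfold cA1 cA
  positivity

private lemma five_le_cA1_pow4 : (5:ℝ) ≤ cA1^4 := by
  have h2 : (2:ℝ) ≤ Real.sqrt 2 * cA := by
    unfold cA
    rw [← Real.sqrt_mul (by norm_num)]
    have h4 : (4:ℝ) ≤ 2 * (2 + Real.sqrt 2/2) := by nlinarith [Real.sqrt_nonneg 2]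
    calc (2:ℝ) = Real.sqrt 4 := by
          rw [show (4:ℝ) = 2^2 by norm_num, Real.sqrt_sq (by norm_num)]
      _ ≤ _ := Real.sqrt_le_sqrt h4
  have hx : (2:ℝ) ≤ (Real.sqrt 2 * cA) ^ ((4:ℝ)/3) := by
    calc (2:ℝ) = (2:ℝ)^(1:ℝ) := (Real.rpow_one 2).symm
      _ ≤ (2:ℝ)^((4:ℝ)/3) := Real.rpow_le_rpow_of_exponent_le (by norm_num) (by norm_num)
      _ ≤ _ := Real.rpow_le_rpow (by norm_num) h2 (by norm_num)
  have hb : (0:ℝ) ≤ 1 + (Real.sqrt 2 * cA) ^ ((4:ℝ)/3) := by linarith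
  have hpow : cA1^4 = (1 + (Real.sqrt 2 * cA) ^ ((4:ℝ)/3))^(3:ℝ) := by
    unfold cA1
    rw [← Real.rpow_natCast ((1 + (Real.sqrt 2 * cA) ^ ((4:ℝ)/3)) ^ ((3:ℝ)/4)) 4,
        ← Real.rpow_mul hb]
    norm_num
  rw [hpow]
  calc (5:ℝ) ≤ (3:ℝ)^(3:ℝ) := by
        rw [show (3:ℝ)^(3:ℝ) = (3:ℝ)^(3:ℕ) by rw [← Real.rpow_natCast]; norm_num]
        norm_num
    _ ≤ _ := Real.rpow_le_rpow (by norm_num) (by linarith) (by norm_num)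

private lemma five_le_sq_sq : (5:ℝ) ≤ (cA1^2)^2 := by
  have := five_le_cA1_pow4; nlinarith

private lemma quad_step {a b c2 N : ℝ} (hc : 5 ≤ c2^2) (hN : N^2 = a^2+b^2) :
    (a+2*b)^2 ≤ (c2*N)^2 := by
  nlinarith [sq_nonneg (2*a-b),
    mul_nonneg (sub_nonneg.mpr hc) (add_nonneg (sq_nonneg a) (sq_nonneg b))]

/-- Lemma 4.5: discrete Agmon inequality for difference quotients whose mean
need not vanish: `‖Dᵏf_n‖ ≤ c_{A,1} ‖Dᵏf‖₀^{1/2} ‖Dᵏf‖₁^{1/2}`. -/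
theorem agmon_dq
    {X : Type*} [NormedAddCommGroup X] [InnerProductSpace ℝ X] [CompleteSpace X]
    (T : ℝ) (hT : 0 < T) (M : ℕ) (hM : 0 < M) (τ : ℝ) (hτ : τ = T / M)
    (f : ℕ → X) (hmean : ∑ n ∈ Finset.range (M + 1), f n = 0)
    (k : ℕ) (hk : 1 ≤ k) (hkM : k + 1 ≤ M)
    (n : ℕ) (hnk : k ≤ n) (hnM : n ≤ M) :
    ‖(Dq τ)^[k] f n‖ ≤
      cA1 * (seqNorm0 τ k M ((Dq τ)^[k] f)) ^ ((1:ℝ)/2) *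
        (normm τ T M k 1 f) ^ ((1:ℝ)/2) := by
  have hτpos : 0 < τ := by rw [hτ]; positivity
  have hτne : τ ≠ 0 := ne_of_gt hτpos
  have hMk : (0:ℝ) < (M:ℝ) + 1 - (k:ℝ) := by
    have : (k:ℝ) ≤ (M:ℝ) := by exact_mod_cast (by omega : k ≤ M)
    linarith
  set TK : ℝ := ((M:ℝ) + 1 - (k:ℝ)) * τ with hTK
  have hTKpos : 0 < TK := mul_pos hMk hτpos
  set g := (Dq τ)^[k] f with hg
  set A := seqNorm0 τ k M g with hA
  set B := seqNorm0 τ (k+1) M ((Dq τ)^[k+1] f) with hB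
  clear_value TK g A B
  have hDg : (Dq τ)^[k+1] f = Dq τ g := by rw [hg, Function.iterate_succ_apply']
  have hA0 : 0 ≤ A := by rw [hA]; unfold seqNorm0; exact Real.sqrt_nonneg _
  have hB0 : 0 ≤ B := by rw [hB]; unfold seqNorm0; exact Real.sqrt_nonneg _
  have hA2 : A^2 = τ * ∑ i ∈ Finset.Icc k M, ‖g i‖^2 := by
    rw [hA]; unfold seqNorm0; rw [Real.sq_sqrt (by positivity)]
  have hB2 : B^2 = τ * ∑ i ∈ Finset.Icc (k+1) M, ‖Dq τ g i‖^2 := by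
    rw [hB, hDg]; unfold seqNorm0; rw [Real.sq_sqrt (by positivity)]
  -- pointwise bound on increments
  have hpt : ∀ i : ℕ, |‖g i‖^2 - ‖g (i-1)‖^2| ≤ τ * (‖Dq τ g i‖ * (‖g i‖ + ‖g (i-1)‖)) := by
    intro i
    have hdiff : g i - g (i-1) = τ • Dq τ g i := by
      simp only [Dq]
      rw [smul_smul, mul_inv_cancel₀ hτne, one_smul]
    have hinner : (inner ℝ (g i - g (i-1)) (g i + g (i-1)) : ℝ) = ‖g i‖^2 - ‖g (i-1)‖^2 := by
      rw [inner_sub_left, inner_add_right, inner_add_right,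
        real_inner_self_eq_norm_sq, real_inner_self_eq_norm_sq,
        real_inner_comm (g (i-1)) (g i)]
      ring
    rw [← hinner]
    calc |(inner ℝ (g i - g (i-1)) (g i + g (i-1)) : ℝ)|
        ≤ ‖g i - g (i-1)‖ * ‖g i + g (i-1)‖ := abs_real_inner_le_norm _ _
      _ ≤ ‖g i - g (i-1)‖ * (‖g i‖ + ‖g (i-1)‖) :=
          mul_le_mul_of_nonneg_left (norm_add_le _ _) (norm_nonneg _)
      _ = τ * (‖Dq τ g i‖ * (‖g i‖ + ‖g (i-1)‖)) := by
          rw [hdiff, norm_smul, Real.norm_eq_abs, abs_of_pos hτpos]; ring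
  -- Cauchy--Schwarz bounds
  have hsub : ∑ i ∈ Finset.Icc (k+1) M, ‖g i‖^2 ≤ ∑ i ∈ Finset.Icc k M, ‖g i‖^2 :=
    Finset.sum_le_sum_of_subset_of_nonneg (Finset.Icc_subset_Icc (by omega) le_rfl)
      (fun i _ _ => by positivity)
  have hshift : ∑ i ∈ Finset.Icc (k+1) M, ‖g (i-1)‖^2 ≤ ∑ i ∈ Finset.Icc k M, ‖g i‖^2 := by
    rw [← Finset.sum_image (g := fun i => i - 1) (f := fun j => ‖g j‖^2)
      (by intro x hx y hy hxy
          simp only [Finset.coe_Icc, Finset.mem_coe, Finset.mem_Icc, Set.mem_Icc] at hx hy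
          have hxy' : x - 1 = y - 1 := hxy
          omega)]
    apply Finset.sum_le_sum_of_subset_of_nonneg
    · intro j hj
      simp only [Finset.mem_image, Finset.mem_Icc] at hj
      obtain ⟨i, hi, rfl⟩ := hj
      simp only [Finset.mem_Icc]
      omega
    · intro i _ _; positivity
  have hCS : ∀ v : ℕ → ℝ, (∀ i, 0 ≤ v i) →
      (∑ i ∈ Finset.Icc (k+1) M, (v i)^2 ≤ ∑ i ∈ Finset.Icc k M, ‖g i‖^2) →
      τ * ∑ i ∈ Finset.Icc (k+1) M, ‖Dq τ g i‖ * v i ≤ A * B := by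
    intro v hv hvsum
    have cs := Finset.sum_mul_sq_le_sq_mul_sq (Finset.Icc (k+1) M)
      (fun i => ‖Dq τ g i‖) (fun i => v i)
    apply le_of_sq_le_sq'
    · apply mul_nonneg hτpos.le
      exact Finset.sum_nonneg (fun i _ => mul_nonneg (norm_nonneg _) (hv i))
    · exact mul_nonneg hA0 hB0
    have e1 : (τ * ∑ i ∈ Finset.Icc (k+1) M, ‖Dq τ g i‖ * v i)^2
        = τ^2 * (∑ i ∈ Finset.Icc (k+1) M, ‖Dq τ g i‖ * v i)^2 := by ring
    have e2 : (A*B)^2 = A^2 * B^2 := by ring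
    rw [e1, e2, hA2, hB2]
    have hv0 : 0 ≤ ∑ i ∈ Finset.Icc (k+1) M, (v i)^2 :=
      Finset.sum_nonneg (fun i _ => sq_nonneg _)
    have hDg0 : 0 ≤ ∑ i ∈ Finset.Icc (k+1) M, ‖Dq τ g i‖^2 :=
      Finset.sum_nonneg (fun i _ => sq_nonneg _)
    nlinarith [mul_le_mul_of_nonneg_left cs (sq_nonneg τ),
      mul_le_mul_of_nonneg_left hvsum (mul_nonneg (sq_nonneg τ) hDg0)]
  have hS : ∑ i ∈ Finset.Icc (k+1) M, |‖g i‖^2 - ‖g (i-1)‖^2| ≤ 2 * (A * B) := by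
    have step1 : ∑ i ∈ Finset.Icc (k+1) M, |‖g i‖^2 - ‖g (i-1)‖^2|
        ≤ ∑ i ∈ Finset.Icc (k+1) M, τ * (‖Dq τ g i‖ * (‖g i‖ + ‖g (i-1)‖)) :=
      Finset.sum_le_sum (fun i _ => hpt i)
    have step2 : ∑ i ∈ Finset.Icc (k+1) M, τ * (‖Dq τ g i‖ * (‖g i‖ + ‖g (i-1)‖))
        = τ * ∑ i ∈ Finset.Icc (k+1) M, ‖Dq τ g i‖ * ‖g i‖
          + τ * ∑ i ∈ Finset.Icc (k+1) M, ‖Dq τ g i‖ * ‖g (i-1)‖ := by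
      rw [Finset.mul_sum, Finset.mul_sum, ← Finset.sum_add_distrib]
      apply Finset.sum_congr rfl
      intro i _; ring
    have cs1 := hCS (fun i => ‖g i‖) (fun i => norm_nonneg _) hsub
    have cs2 := hCS (fun i => ‖g (i-1)‖) (fun i => norm_nonneg _) hshift
    linarith
  -- choose a good point m
  obtain ⟨m, hmmem, hmle⟩ :
      ∃ m ∈ Finset.Icc k M, ‖g m‖^2 ≤ A^2 / TK := by
    apply Finset.exists_le_of_sum_le ⟨k, Finset.mem_Icc.mpr ⟨le_rfl, by omega⟩⟩
    rw [Finset.sum_const, Nat.card_Icc, nsmul_eq_mul]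
    have hcard : ((M + 1 - k : ℕ) : ℝ) = (M:ℝ) + 1 - (k:ℝ) := by
      have hkM' : k ≤ M + 1 := by omega
      push_cast [hkM']
      ring
    rw [hcard]
    have hrhs : ((M:ℝ) + 1 - (k:ℝ)) * (A^2 / TK) = A^2 / τ := by
      rw [hTK]
      field_simp
    rw [hrhs, hA2]
    rw [mul_comm τ _, mul_div_assoc, div_self hτne, mul_one]
  -- main quadratic bound
  have hmain : ‖g n‖^2 ≤ A^2 / TK + 2 * (A * B) := by
    have h2p := two_point (fun i => ‖g i‖^2) (Finset.mem_Icc.mp hmmem).1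
      (Finset.mem_Icc.mp hmmem).2 hnk hnM
    linarith
  -- identify the normm value
  have hTkk : Tk τ T M k = TK := by
    unfold Tk; rw [if_neg (by omega), hTK]
  have hsum_eq : ∑ j ∈ Finset.Icc k (k+1),
      (seqNorm0 τ j M ((Dq τ)^[j] f))^2 / (Tk τ T M j)^(2*(1+k-j))
      = (A/TK)^2 + B^2 := by
    rw [Finset.sum_Icc_succ_top (Nat.le_succ k), Finset.Icc_self, Finset.sum_singleton]
    have e1 : 2*(1+k-k) = 2 := by omega
    have e2 : 2*(1+k-(k+1)) = 0 := by omega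
    rw [e1, e2, pow_zero, div_one, hTkk, ← hg, ← hA, ← hB, div_pow]
  set N := normm τ T M k 1 f with hN
  clear_value N
  have hN0 : 0 ≤ N := by rw [hN]; unfold normm; exact Real.sqrt_nonneg _
  have hN2 : N^2 = (A/TK)^2 + B^2 := by
    rw [hN]; unfold normm
    rw [hsum_eq, Real.sq_sqrt (add_nonneg (sq_nonneg _) (sq_nonneg _))]
  -- final constant step
  have hstep : A/TK + 2*B ≤ cA1^2 * N := by
    exact le_of_sq_le_sq' (add_nonneg (div_nonneg hA0 hTKpos.le) (by linarith))
      (mul_nonneg (sq_nonneg _) hN0) (quad_step five_le_sq_sq hN2)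
  have hfin2 : ‖g n‖^2 ≤ cA1^2 * A * N := by
    have : A^2 / TK + 2*(A*B) = A * (A/TK + 2*B) := by field_simp
    have hle : A * (A/TK + 2*B) ≤ A * (cA1^2 * N) :=
      mul_le_mul_of_nonneg_left hstep hA0
    calc ‖g n‖^2 ≤ A^2 / TK + 2*(A*B) := hmain
      _ = A * (A/TK + 2*B) := this
      _ ≤ A * (cA1^2 * N) := hle
      _ = cA1^2 * A * N := by ring
  have hfinal := Real.sqrt_le_sqrt hfin2
  rw [Real.sqrt_sq (norm_nonneg _)] at hfinal
  calc ‖g n‖ ≤ Real.sqrt (cA1^2 * A * N) := hfinal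
    _ = cA1 * A ^ ((1:ℝ)/2) * N ^ ((1:ℝ)/2) := by
        rw [Real.sqrt_mul (mul_nonneg (sq_nonneg _) hA0), Real.sqrt_mul (sq_nonneg cA1),
          Real.sqrt_sq cA1_nonneg, Real.sqrt_eq_rpow, Real.sqrt_eq_rpow]
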